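/- Let P1, P2 : \mathbb{N} \times \mathbb{N} \to \mathbb{Z} and K : \mathbb{N} \to \mathbb{Z} satisfy, for all nonnegative integers m and n: P1(m,n) = (n+2)^m - \sum_{j=0}^{m-1} \binom{m}{j} (2^{m-j} + 1) P1(j,n), P2(m,n) = (n+1)^m - \sum_{j=0}^{m-1} \binom{m}{j} (2^{m-j} + 1) P2(j,n), and K(m) = -(2^{m+1} + 1) - \sum_{j=0}^{m-1} \binom{m}{j} (2^{m-j} + 1) K(j) (empty sums when m = 0). Then for all nonnegative integers m and n: \sum_{k=1}^{n} k^m L_k = P1(m,n) L_n + P2(m,n) L_{n+1} + K(m). -/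

import Mathlib

def fibZ (n : ℤ) : ℤ :=
  if 0 ≤ n then (Nat.fib n.toNat : ℤ)
  else (-1) ^ ((-n).toNat + 1) * (Nat.fib (-n).toNat : ℤ)

def lucasZ (n : ℤ) : ℤ := fibZ (n - 1) + fibZ (n + 1)

lemma fibZ_natCast (n : ℕ) : fibZ (n : ℤ) = Nat.fib n := by
  simp [fibZ]

lemma lucasZ_natCast (n : ℕ) : lucasZ ((n : ℤ) + 1) = Nat.fib n + Nat.fib (n + 2) := by
  have h1 : ((n : ℤ) + 1) - 1 = (n : ℤ) := by ring
  have h2 : ((n : ℤ) + 1) + 1 = ((n + 2 : ℕ) : ℤ) := by push_cast; ring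
  rw [lucasZ, h1, h2, fibZ_natCast, fibZ_natCast]

lemma lucasZ_zero : lucasZ 0 = 2 := by
  norm_num [lucasZ, fibZ]

lemma lucasZ_one : lucasZ 1 = 1 := by
  have := lucasZ_natCast 0
  norm_num at this
  convert this using 2

lemma lucasZ_rec (n : ℕ) : lucasZ ((n : ℤ) + 2) = lucasZ ((n : ℤ) + 1) + lucasZ (n : ℤ) := by
  cases n with
  | zero =>
    have h2 := lucasZ_natCast 1
    have h1 := lucasZ_natCast 0
    norm_num at h2 h1 ⊢
    rw [h2, h1, lucasZ_zero]
    norm_num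
  | succ k =>
    have e1 : ((k + 1 : ℕ) : ℤ) + 2 = ((k + 2 : ℕ) : ℤ) + 1 := by push_cast; ring
    have e3 : ((k + 1 : ℕ) : ℤ) = ((k : ℕ) : ℤ) + 1 := by push_cast; ring
    rw [e1, lucasZ_natCast, lucasZ_natCast, e3, lucasZ_natCast]
    have hn : Nat.fib (k + 2) + Nat.fib (k + 2 + 2)
        = (Nat.fib (k + 1) + Nat.fib (k + 1 + 2)) + (Nat.fib k + Nat.fib (k + 2)) := by
      have h1 : Nat.fib (k + 2 + 2) = Nat.fib (k + 2) + Nat.fib (k + 2 + 1) := Nat.fib_add_two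
      have h2 : Nat.fib (k + 1 + 2) = Nat.fib (k + 1) + Nat.fib (k + 1 + 1) := Nat.fib_add_two
      have h3 : Nat.fib (k + 2) = Nat.fib k + Nat.fib (k + 1) := Nat.fib_add_two
      ring_nf at h1 h2 h3 ⊢
      omega
    exact_mod_cast congrArg (Nat.cast : ℕ → ℤ) hn

lemma zero_of_rec (f : ℕ → ℤ)
    (h : ∀ m, f m = - ∑ j ∈ Finset.range m, (m.choose j : ℤ) * (2 ^ (m - j) + 1) * f j) :
    ∀ m, f m = 0 := by
  intro m
  induction m using Nat.strong_induction_on with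
  | _ m ih =>
    rw [h m, Finset.sum_eq_zero, neg_zero]
    intro j hj
    rw [ih j (Finset.mem_range.mp hj), mul_zero]

lemma binom_sum (x : ℤ) (m : ℕ) :
    ∑ j ∈ Finset.range m, (m.choose j : ℤ) * (2 ^ (m - j) + 1) * x ^ j
      = (x + 2) ^ m + (x + 1) ^ m - 2 * x ^ m := by
  have h1 : (x + 2) ^ m = ∑ j ∈ Finset.range (m + 1), x ^ j * 2 ^ (m - j) * m.choose j :=
    add_pow x 2 m
  have h2 : (x + 1) ^ m = ∑ j ∈ Finset.range (m + 1), x ^ j * 1 ^ (m - j) * m.choose j :=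
    add_pow x 1 m
  simp only [one_pow, mul_one] at h2
  rw [Finset.sum_range_succ] at h1 h2
  simp only [Nat.sub_self, pow_zero, Nat.choose_self, Nat.cast_one, mul_one, one_mul] at h1 h2
  have key : ∑ j ∈ Finset.range m, (m.choose j : ℤ) * (2 ^ (m - j) + 1) * x ^ j
      = (∑ j ∈ Finset.range m, x ^ j * 2 ^ (m - j) * m.choose j)
        + (∑ j ∈ Finset.range m, x ^ j * m.choose j) := by
    rw [← Finset.sum_add_distrib]
    exact Finset.sum_congr rfl fun j _ => by ring
  rw [key]
  linarith

theorem ledin_lucas_recursive (P1 P2 : ℕ → ℕ → ℤ) (K : ℕ → ℤ)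
    (hP1 : ∀ m n : ℕ, P1 m n =
      ((n : ℤ) + 2) ^ m - ∑ j ∈ Finset.range m, (m.choose j : ℤ) * (2 ^ (m - j) + 1) * P1 j n)
    (hP2 : ∀ m n : ℕ, P2 m n =
      ((n : ℤ) + 1) ^ m - ∑ j ∈ Finset.range m, (m.choose j : ℤ) * (2 ^ (m - j) + 1) * P2 j n)
    (hK : ∀ m : ℕ, K m =
      -(2 ^ (m + 1) + 1) - ∑ j ∈ Finset.range m, (m.choose j : ℤ) * (2 ^ (m - j) + 1) * K j) :
    ∀ m n : ℕ, (∑ k ∈ Finset.Icc 1 n, (k : ℤ) ^ m * lucasZ k) =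
      P1 m n * lucasZ n + P2 m n * lucasZ (n + 1) + K m := by
  have h21 : ∀ n m : ℕ, P2 m (n + 1) = P1 m n := by
    intro n
    have hz := zero_of_rec (fun m => P2 m (n + 1) - P1 m n) ?_
    · intro m; have := hz m; linarith
    intro m
    rw [hP2 m (n + 1), hP1 m n]
    have hs : ∑ j ∈ Finset.range m, (m.choose j : ℤ) * (2 ^ (m - j) + 1) *
          (P2 j (n + 1) - P1 j n)
        = (∑ j ∈ Finset.range m, (m.choose j : ℤ) * (2 ^ (m - j) + 1) * P2 j (n + 1))
          - (∑ j ∈ Finset.range m, (m.choose j : ℤ) * (2 ^ (m - j) + 1) * P1 j n) := by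
      rw [← Finset.sum_sub_distrib]
      exact Finset.sum_congr rfl fun j _ => by ring
    rw [hs]
    push_cast
    ring
  have hQ : ∀ n m : ℕ, P1 m (n + 1) + P1 m n - P2 m n = ((n : ℤ) + 1) ^ m := by
    intro n
    have hz := zero_of_rec
      (fun m => P1 m (n + 1) + P1 m n - P2 m n - ((n : ℤ) + 1) ^ m) ?_
    · intro m; have := hz m; linarith
    intro m
    rw [hP1 m (n + 1), hP1 m n, hP2 m n]
    have hs : ∑ j ∈ Finset.range m, (m.choose j : ℤ) * (2 ^ (m - j) + 1) *
          (P1 j (n + 1) + P1 j n - P2 j n - ((n : ℤ) + 1) ^ j)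
        = (∑ j ∈ Finset.range m, (m.choose j : ℤ) * (2 ^ (m - j) + 1) * P1 j (n + 1))
          + (∑ j ∈ Finset.range m, (m.choose j : ℤ) * (2 ^ (m - j) + 1) * P1 j n)
          - (∑ j ∈ Finset.range m, (m.choose j : ℤ) * (2 ^ (m - j) + 1) * P2 j n)
          - (∑ j ∈ Finset.range m, (m.choose j : ℤ) * (2 ^ (m - j) + 1) * ((n : ℤ) + 1) ^ j) := by
      rw [← Finset.sum_add_distrib, ← Finset.sum_sub_distrib, ← Finset.sum_sub_distrib]
      exact Finset.sum_congr rfl fun j _ => by ring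
    rw [hs, binom_sum]
    push_cast
    ring
  have hR : ∀ m : ℕ, 2 * P1 m 0 + P2 m 0 + K m = 0 := by
    have hz := zero_of_rec (fun m => 2 * P1 m 0 + P2 m 0 + K m) ?_
    · exact hz
    intro m
    rw [hP1 m 0, hP2 m 0, hK m]
    have hs : ∑ j ∈ Finset.range m, (m.choose j : ℤ) * (2 ^ (m - j) + 1) *
          (2 * P1 j 0 + P2 j 0 + K j)
        = 2 * (∑ j ∈ Finset.range m, (m.choose j : ℤ) * (2 ^ (m - j) + 1) * P1 j 0)
          + (∑ j ∈ Finset.range m, (m.choose j : ℤ) * (2 ^ (m - j) + 1) * P2 j 0)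
          + (∑ j ∈ Finset.range m, (m.choose j : ℤ) * (2 ^ (m - j) + 1) * K j) := by
      rw [Finset.mul_sum, ← Finset.sum_add_distrib, ← Finset.sum_add_distrib]
      exact Finset.sum_congr rfl fun j _ => by ring
    rw [hs]
    push_cast
    ring
  intro m n
  induction n with
  | zero =>
    simp only [Finset.Icc_self, Nat.cast_zero, CharP.cast_eq_zero, zero_add]
    rw [show (Finset.Icc 1 0 : Finset ℕ) = ∅ from rfl, Finset.sum_empty, lucasZ_zero, lucasZ_one]
    linarith [hR m]
  | succ n ih =>
    rw [Finset.sum_Icc_succ_top (by omega : 1 ≤ n + 1), ih]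
    have hrec := lucasZ_rec n
    have h1 := h21 n m
    have h2 := hQ n m
    push_cast
    rw [show ((n : ℤ) + 1 + 1) = (n : ℤ) + 2 from by ring]
    linear_combination (-(lucasZ ((n : ℤ) + 1))) * h2 + (-(lucasZ ((n : ℤ) + 2))) * h1
      + (-(P1 m n)) * hrec
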